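/- For i = 1,2 let A_i = {(x,y) ∈ ℝ² : |x| ≤ γ_i/2, |y − m_i x| ≤ δ/2} with 0 < δ ≤ γ₂ ≤ γ₁ and slopes |m_i| ≤ K for a fixed constant K, and let α = |arctan m₁ − arctan m₂|. Then there is a constant C depending only on K such that |A₁ ∩ A₂| ≤ C · δ² γ₂ / (δ + γ₂ α). -/
import Mathlib


open MeasureTheory Set
open scoped ENNReal

lemma arctan_lip (a b : ℝ) : |Real.arctan a - Real.arctan b| ≤ |a - b| := by
  have h := convex_univ.norm_image_sub_le_of_norm_deriv_le (C := 1)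
    (f := Real.arctan)
    (fun x _ => Real.differentiable_arctan x)
    (fun x _ => by
      simp only [Real.deriv_arctan, Real.norm_eq_abs]
      rw [abs_of_pos (by positivity), div_le_one (by positivity)]
      nlinarith [sq_nonneg x])
    (Set.mem_univ b) (Set.mem_univ a)
  simpa using h

lemma strip_vol (δ ℓ m : ℝ) (hδ : 0 ≤ δ) (hℓ : 0 ≤ ℓ) :
    volume {p : ℝ × ℝ | |p.1| ≤ ℓ / 2 ∧ |p.2 - m * p.1| ≤ δ / 2} ≤
      ENNReal.ofReal (δ * ℓ) := by
  have hm : MeasurableSet {p : ℝ × ℝ | |p.1| ≤ ℓ / 2 ∧ |p.2 - m * p.1| ≤ δ / 2} := by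
    apply MeasurableSet.inter
    · exact measurableSet_le (measurable_fst.abs) measurable_const
    · exact measurableSet_le ((measurable_snd.sub (measurable_fst.const_mul m)).abs)
        measurable_const
  rw [Measure.volume_eq_prod, Measure.prod_apply hm]
  have hsec : ∀ x : ℝ, volume (Prod.mk x ⁻¹'
      {p : ℝ × ℝ | |p.1| ≤ ℓ / 2 ∧ |p.2 - m * p.1| ≤ δ / 2}) ≤
      (Icc (-(ℓ/2)) (ℓ/2)).indicator (fun _ => ENNReal.ofReal δ) x := by
    intro x
    by_cases hx : |x| ≤ ℓ / 2
    · have hxI : x ∈ Icc (-(ℓ/2)) (ℓ/2) := abs_le.mp hx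
      rw [Set.indicator_of_mem hxI]
      have : Prod.mk x ⁻¹' {p : ℝ × ℝ | |p.1| ≤ ℓ / 2 ∧ |p.2 - m * p.1| ≤ δ / 2}
          ⊆ Icc (m * x - δ/2) (m * x + δ/2) := by
        intro y hy
        have h2 := hy.2
        simp only [Set.mem_preimage, Set.mem_setOf_eq] at h2 ⊢
        rcases abs_le.mp h2 with ⟨h3, h4⟩
        constructor <;> [linarith; linarith]
      calc volume _ ≤ volume (Icc (m * x - δ/2) (m * x + δ/2)) := measure_mono this
        _ = ENNReal.ofReal δ := by rw [Real.volume_Icc]; ring_nf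
    · have : Prod.mk x ⁻¹' {p : ℝ × ℝ | |p.1| ≤ ℓ / 2 ∧ |p.2 - m * p.1| ≤ δ / 2} = ∅ := by
        ext y; simp only [Set.mem_preimage, Set.mem_setOf_eq, Set.mem_empty_iff_false,
          iff_false, not_and]
        intro h; exact absurd h hx
      rw [this]; simp
  calc ∫⁻ x, volume (Prod.mk x ⁻¹'
        {p : ℝ × ℝ | |p.1| ≤ ℓ / 2 ∧ |p.2 - m * p.1| ≤ δ / 2})
      ≤ ∫⁻ x, (Icc (-(ℓ/2)) (ℓ/2)).indicator (fun _ => ENNReal.ofReal δ) x :=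
        lintegral_mono hsec
    _ = ENNReal.ofReal δ * volume (Icc (-(ℓ/2)) (ℓ/2)) := by
        rw [lintegral_indicator measurableSet_Icc, setLIntegral_const, mul_comm]
    _ = ENNReal.ofReal (δ * ℓ) := by
        rw [Real.volume_Icc, ← ENNReal.ofReal_mul hδ]
        ring_nf

/-- Area bound for the intersection of two thin parallelograms:
`|A₁ ∩ A₂| ≤ C δ²γ₂/(δ + γ₂ α)`, where `α` is the angle between them. -/
theorem statement12 (K : ℝ) (hK : 0 < K) :
    ∃ C > 0, ∀ δ γ₁ γ₂ m₁ m₂ : ℝ, 0 < δ → δ ≤ γ₂ → γ₂ ≤ γ₁ →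
      |m₁| ≤ K → |m₂| ≤ K →
      volume ({p : ℝ × ℝ | |p.1| ≤ γ₁ / 2 ∧ |p.2 - m₁ * p.1| ≤ δ / 2} ∩
              {p : ℝ × ℝ | |p.1| ≤ γ₂ / 2 ∧ |p.2 - m₂ * p.1| ≤ δ / 2}) ≤
        ENNReal.ofReal
          (C * δ ^ 2 * γ₂ / (δ + γ₂ * |Real.arctan m₁ - Real.arctan m₂|)) := by
  refine ⟨3, by norm_num, fun δ γ₁ γ₂ m₁ m₂ hδ hδγ₂ hγ₂γ₁ hm₁ hm₂ => ?_⟩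
  set α := |Real.arctan m₁ - Real.arctan m₂| with hα
  have hα0 : 0 ≤ α := abs_nonneg _
  have hγ₂ : 0 < γ₂ := lt_of_lt_of_le hδ hδγ₂
  have hαΔ : α ≤ |m₁ - m₂| := arctan_lip m₁ m₂
  -- choose width ℓ
  set Δ := |m₁ - m₂| with hΔdef
  have hΔ0 : 0 ≤ Δ := abs_nonneg _
  obtain ⟨ℓ, hℓ0, hℓγ₂, hkey, hsub⟩ :
      ∃ ℓ : ℝ, 0 ≤ ℓ ∧ ℓ ≤ γ₂ ∧ ℓ * α ≤ 2 * δ ∧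
        ({p : ℝ × ℝ | |p.1| ≤ γ₁ / 2 ∧ |p.2 - m₁ * p.1| ≤ δ / 2} ∩
         {p : ℝ × ℝ | |p.1| ≤ γ₂ / 2 ∧ |p.2 - m₂ * p.1| ≤ δ / 2}) ⊆
        {p : ℝ × ℝ | |p.1| ≤ ℓ / 2 ∧ |p.2 - m₁ * p.1| ≤ δ / 2} := by
    by_cases hΔz : Δ = 0
    · refine ⟨γ₂, hγ₂.le, le_refl _, ?_, ?_⟩
      · have : α = 0 := le_antisymm (hΔz ▸ hαΔ) hα0
        rw [this]; nlinarith
      · rintro p ⟨h1, h2⟩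
        exact ⟨h2.1, h1.2⟩
    · have hΔpos : 0 < Δ := lt_of_le_of_ne hΔ0 (Ne.symm hΔz)
      refine ⟨min γ₂ (2 * δ / Δ), le_min hγ₂.le (by positivity), min_le_left _ _, ?_, ?_⟩
      · calc min γ₂ (2 * δ / Δ) * α ≤ (2 * δ / Δ) * Δ := by
              apply mul_le_mul (min_le_right _ _) hαΔ hα0 (by positivity)
          _ = 2 * δ := by field_simp
      · rintro p ⟨⟨_, h1b⟩, ⟨h2a, h2b⟩⟩
        rw [Set.mem_setOf_eq, ← min_div_div_right (by norm_num : (0:ℝ) ≤ 2)]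
        refine ⟨le_min h2a ?_, h1b⟩
        have : (m₁ - m₂) * p.1 = (p.2 - m₂ * p.1) - (p.2 - m₁ * p.1) := by ring
        have habs : Δ * |p.1| ≤ δ := by
          rw [← abs_mul, this]
          calc |(p.2 - m₂ * p.1) - (p.2 - m₁ * p.1)| ≤
              |p.2 - m₂ * p.1| + |p.2 - m₁ * p.1| := abs_sub _ _
            _ ≤ δ / 2 + δ / 2 := add_le_add h2b h1b
            _ = δ := by ring
        have h5 : |p.1| ≤ δ / Δ := by
          rw [le_div_iff₀ hΔpos]; nlinarith [habs]
        calc |p.1| ≤ δ / Δ := h5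
          _ = 2 * δ / Δ / 2 := by ring
  calc volume _ ≤ volume {p : ℝ × ℝ | |p.1| ≤ ℓ / 2 ∧ |p.2 - m₁ * p.1| ≤ δ / 2} :=
        measure_mono hsub
    _ ≤ ENNReal.ofReal (δ * ℓ) := strip_vol δ ℓ m₁ hδ.le hℓ0
    _ ≤ ENNReal.ofReal (3 * δ ^ 2 * γ₂ / (δ + γ₂ * α)) := by
        apply ENNReal.ofReal_le_ofReal
        rw [le_div_iff₀ (by positivity)]
        nlinarith [mul_le_mul_of_nonneg_left hkey (mul_nonneg hδ.le hγ₂.le),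
          mul_le_mul_of_nonneg_left hℓγ₂ (sq_nonneg δ)]
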